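/- Let X = (V,E) be a digraph, e = (u,v) ∈ E an edge, X∖e the digraph obtained by deleting e, and X/e the digraph obtained by contracting e. For a positive integer m let N_X(m) denote the number of pairs (f, σ) where f : V → {1,…,m} and σ is an (f,X)-friendly V-listing. Then for every m, N_X(m) = N_{X∖e}(m) − N_{X/e}(m). -/

import Mathlib

/-- A listing `l = (σ_1, …, σ_n)` is `(f,X)`-friendly if
`f(σ_1) ≤ f(σ_2) ≤ ⋯ ≤ f(σ_n)` and `f(σ_j) < f(σ_{j+1})` for each `j ∈ [n-1]`
with `(σ_j, σ_{j+1})` an edge of `X`. -/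
def Friendly {V : Type*} (E : V → V → Prop) (f : V → ℕ) (l : List V) : Prop :=
  l.Chain' (fun u v => f u ≤ f v) ∧
  ∀ i : ℕ, ∀ (h1 : 1 ≤ i) (h2 : i ≤ l.length - 1),
    E (l.get ⟨i - 1, by omega⟩) (l.get ⟨i, by omega⟩) →
      f (l.get ⟨i - 1, by omega⟩) < f (l.get ⟨i, by omega⟩)

/-- `N_X(m)`: the number of pairs `(f, σ)` with `f : V → {1, …, m}` a coloring and `σ`
an `(f,X)`-friendly `V`-listing (the value of the Redei-Berge polynomial at `m`). -/
noncomputable def RBCount (V : Type*) [Fintype V] (E : V → V → Prop) (m : ℕ) : ℕ :=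
  Nat.card {p : (V → ℕ) × List V //
    (∀ x, 1 ≤ p.1 x ∧ p.1 x ≤ m) ∧ p.2.Nodup ∧ (∀ x, x ∈ p.2) ∧ Friendly E p.1 p.2}

/-- Edge relation of the deletion `X ∖ e` of the edge `e = (u,v)`. -/
def delEdge {V : Type*} (E : V → V → Prop) (u v : V) (a b : V) : Prop :=
  E a b ∧ ¬(a = u ∧ b = v)

/-- Edge relation of the contraction `X/e` of the edge `e = (u,v)`; the vertex set is
`(V ∖ {u,v}) ⊕ Unit`, where the extra vertex `Sum.inr ()` is the contracted vertex `e`. -/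
def contractEdge {V : Type*} (E : V → V → Prop) (u v : V) :
    {w : V // w ≠ u ∧ w ≠ v} ⊕ Unit → {w : V // w ≠ u ∧ w ≠ v} ⊕ Unit → Prop
  | Sum.inl a, Sum.inl b => E a.1 b.1
  | Sum.inl a, Sum.inr _ => E a.1 u
  | Sum.inr _, Sum.inl b => E v b.1
  | Sum.inr _, Sum.inr _ => False

namespace DC

theorem chain'_iff_get {α : Type*} {R : α → α → Prop} {l : List α} :
    l.Chain' R ↔ ∀ (i : ℕ) (h : i < l.length - 1),
      R (l.get ⟨i, by omega⟩) (l.get ⟨i + 1, by omega⟩) := by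
  unfold List.Chain'
  rw [List.isChain_iff_getElem]
  constructor
  · intro h i hi; exact h i (by omega)
  · intro h i hi; exact h i (by omega)

theorem chain'_cons {α : Type*} {R : α → α → Prop} {x y : α} {l : List α} :
    (x :: y :: l).Chain' R ↔ R x y ∧ (y :: l).Chain' R := by
  unfold List.Chain'; exact List.isChain_cons_cons

theorem chain'_cons' {α : Type*} {R : α → α → Prop} {x : α} {l : List α} :
    (x :: l).Chain' R ↔ (∀ y ∈ l.head?, R x y) ∧ l.Chain' R := by
  unfold List.Chain'; exact List.isChain_cons

theorem chain'_map {α β : Type*} {R : α → α → Prop} (f : β → α) {l : List β} :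
    (l.map f).Chain' R ↔ l.Chain' (fun a b : β => R (f a) (f b)) := by
  unfold List.Chain'; exact List.isChain_map f

theorem chain'_append {α : Type*} {R : α → α → Prop} {l₁ l₂ : List α} :
    (l₁ ++ l₂).Chain' R ↔ l₁.Chain' R ∧ l₂.Chain' R ∧
      ∀ x ∈ l₁.getLast?, ∀ y ∈ l₂.head?, R x y := by
  unfold List.Chain'; exact List.isChain_append

/-- The relation whose `Chain'` is friendliness. -/
def Rel {α : Type*} (E : α → α → Prop) (f : α → ℕ) (a b : α) : Prop :=
  f a ≤ f b ∧ (E a b → f a < f b)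

theorem friendly_iff {V : Type*} (E : V → V → Prop) (f : V → ℕ) (l : List V) :
    Friendly E f l ↔ l.Chain' (Rel E f) := by
  rw [Friendly, DC.chain'_iff_get, DC.chain'_iff_get]
  constructor
  · rintro ⟨h1, h2⟩ i hi
    exact ⟨h1 i hi, fun hE => h2 (i+1) (by omega) (by omega) hE⟩
  · intro h
    refine ⟨fun i hi => (h i hi).1, fun i h1 h2 hE => ?_⟩
    have hi : i - 1 < l.length - 1 := by omega
    have h2' := (h (i-1) hi).2
    have heq : i - 1 + 1 = i := by omega
    simp only [heq] at h2'
    exact h2' hE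

theorem chain'_congr {α : Type*} {S R : α → α → Prop} :
    ∀ {l : List α}, (∀ x ∈ l, ∀ y ∈ l, (S x y ↔ R x y)) → (l.Chain' S ↔ l.Chain' R)
  | [], _ => by simp [List.Chain']
  | [a], _ => by simp [List.Chain']
  | a :: b :: t, h => by
    rw [DC.chain'_cons, DC.chain'_cons,
      chain'_congr (fun x hx y hy => h x (List.mem_cons_of_mem a hx) y (List.mem_cons_of_mem a hy)),
      h a (by simp) b (by simp)]

theorem chain'_map_congr {α β : Type*} {S : β → β → Prop} {R : α → α → Prop} {F : α → β}
    {l : List α} (h : ∀ x ∈ l, ∀ y ∈ l, (S (F x) (F y) ↔ R x y)) :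
    (l.map F).Chain' S ↔ l.Chain' R := by
  rw [DC.chain'_map]; exact chain'_congr h

/-- The set of friendly pairs. -/
def SS {α : Type*} (E : α → α → Prop) (m : ℕ) : Set ((α → ℕ) × List α) :=
  {p | (∀ x, 1 ≤ p.1 x ∧ p.1 x ≤ m) ∧ p.2.Nodup ∧ (∀ x, x ∈ p.2) ∧ Friendly E p.1 p.2}

theorem rb_eq {α : Type*} [Fintype α] (E : α → α → Prop) (m : ℕ) :
    RBCount α E m = (SS E m).ncard := by
  rw [← Nat.card_coe_set_eq]; rfl

theorem SS_finite {α : Type*} [Finite α] (E : α → α → Prop) (m : ℕ) : (SS E m).Finite := by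
  classical
  have : Fintype α := Fintype.ofFinite α
  apply Set.Finite.subset
    ((Set.Finite.pi (fun _ : α => Set.finite_Icc 1 m)).prod
      (List.finite_length_le α (Fintype.card α)))
  rintro ⟨f, l⟩ ⟨hf, hn, -, -⟩
  exact ⟨fun x _ => Set.mem_Icc.mpr (hf x), hn.length_le_card⟩

theorem SS_subset {V : Type*} (E : V → V → Prop) (u v : V) (m : ℕ) :
    SS E m ⊆ SS (delEdge E u v) m := by
  rintro ⟨f, l⟩ ⟨hf, hn, hcov, hfr⟩
  refine ⟨hf, hn, hcov, ?_⟩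
  rw [friendly_iff] at hfr ⊢
  exact hfr.imp fun a b hab => ⟨hab.1, fun hd => hab.2 hd.1⟩

section Maps

variable {V : Type*} [DecidableEq V]

/-- contraction map on vertices -/
def gm (u v : V) (x : V) : {w : V // w ≠ u ∧ w ≠ v} ⊕ Unit :=
  if h : x ≠ u ∧ x ≠ v then Sum.inl ⟨x, h⟩ else Sum.inr ()

/-- expansion map on vertices -/
def vK (u v : V) : ({w : V // w ≠ u ∧ w ≠ v} ⊕ Unit) → V :=
  Sum.elim Subtype.val (fun _ => u)

/-- contraction of a listing -/
def ctr (u v : V) (l : List V) : List ({w : V // w ≠ u ∧ w ≠ v} ⊕ Unit) :=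
  (l.filter (fun x => x ≠ v)).map (gm u v)

/-- expansion of a listing -/
def exp (u v : V) (l : List ({w : V // w ≠ u ∧ w ≠ v} ⊕ Unit)) : List V :=
  l.flatMap (Sum.elim (fun a => [a.1]) (fun _ => [u, v]))

/-- contraction of a coloring -/
def cf (u v : V) (f : V → ℕ) : ({w : V // w ≠ u ∧ w ≠ v} ⊕ Unit) → ℕ :=
  Sum.elim (fun a => f a.1) (fun _ => f u)

/-- expansion of a coloring -/
def ef (u v : V) (g : ({w : V // w ≠ u ∧ w ≠ v} ⊕ Unit) → ℕ) (x : V) : ℕ :=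
  if h : x ≠ u ∧ x ≠ v then g (Sum.inl ⟨x, h⟩) else g (Sum.inr ())

variable {u v : V}

theorem gm_eq_inl {x : V} (h1 : x ≠ u) (h2 : x ≠ v) : gm u v x = Sum.inl ⟨x, h1, h2⟩ :=
  dif_pos ⟨h1, h2⟩

theorem gm_u : gm u v u = Sum.inr () := dif_neg (by simp)

theorem gm_v : gm u v v = Sum.inr () := dif_neg (by simp)

theorem ef_val (g : ({w : V // w ≠ u ∧ w ≠ v} ⊕ Unit) → ℕ) (x : {w : V // w ≠ u ∧ w ≠ v}) :
    ef u v g x.1 = g (Sum.inl x) := dif_pos ⟨x.2.1, x.2.2⟩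

theorem ef_u (g : ({w : V // w ≠ u ∧ w ≠ v} ⊕ Unit) → ℕ) : ef u v g u = g (Sum.inr ()) :=
  dif_neg (by simp)

theorem ef_v (g : ({w : V // w ≠ u ∧ w ≠ v} ⊕ Unit) → ℕ) : ef u v g v = g (Sum.inr ()) :=
  dif_neg (by simp)

theorem ctr_decomp (huv : u ≠ v) (a b : List V) (ha : ∀ x ∈ a, x ≠ u ∧ x ≠ v)
    (hb : ∀ x ∈ b, x ≠ u ∧ x ≠ v) :
    ctr u v (a ++ u :: v :: b) = a.map (gm u v) ++ Sum.inr () :: b.map (gm u v) := by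
  unfold ctr
  rw [List.filter_append, List.filter_cons, List.filter_cons,
    List.filter_eq_self.mpr (fun x hx => by simpa using (ha x hx).2),
    List.filter_eq_self.mpr (fun x hx => by simpa using (hb x hx).2)]
  simp [huv, gm_u]

theorem exp_decomp (a b : List ({w : V // w ≠ u ∧ w ≠ v} ⊕ Unit)) :
    exp u v (a ++ Sum.inr () :: b) = exp u v a ++ u :: v :: exp u v b := by
  simp [exp]

theorem exp_eq_map {l : List ({w : V // w ≠ u ∧ w ≠ v} ⊕ Unit)}
    (hl : ∀ w ∈ l, ∃ x, w = Sum.inl x) : exp u v l = l.map (vK u v) := by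
  induction l with
  | nil => rfl
  | cons w t ih =>
    obtain ⟨x, rfl⟩ := hl w (by simp)
    rw [exp, List.flatMap_cons, List.map_cons, ← exp]
    rw [ih (fun y hy => hl y (by simp [hy]))]
    rfl

theorem exp_map_gm {l : List V} (h : ∀ x ∈ l, x ≠ u ∧ x ≠ v) :
    exp u v (l.map (gm u v)) = l := by
  induction l with
  | nil => rfl
  | cons x t ih =>
    have hx := h x (by simp)
    rw [List.map_cons, exp, List.flatMap_cons, gm_eq_inl hx.1 hx.2, ← exp,
      ih (fun y hy => h y (by simp [hy]))]
    rfl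

theorem ctr_exp (huv : u ≠ v) (l : List ({w : V // w ≠ u ∧ w ≠ v} ⊕ Unit)) :
    ctr u v (exp u v l) = l := by
  induction l with
  | nil => rfl
  | cons w t ih =>
    rcases w with x | x
    · rw [exp, List.flatMap_cons, ← exp]
      show ctr u v (x.1 :: exp u v t) = _
      rw [ctr, List.filter_cons, if_pos (by simpa using x.2.2), List.map_cons,
        gm_eq_inl x.2.1 x.2.2, ← ctr, ih]
    · cases x
      rw [exp, List.flatMap_cons, ← exp]
      show ctr u v (u :: v :: exp u v t) = _
      rw [ctr, List.filter_cons, if_pos (by simpa using huv), List.filter_cons,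
        if_neg (by simp), List.map_cons, gm_u, ← ctr, ih]

end Maps

section Decomp

variable {V : Type*} [DecidableEq V]

theorem nodup_facts {u v : V} {a b : List V} (hn : (a ++ u :: v :: b).Nodup) :
    (∀ x ∈ a, x ≠ u ∧ x ≠ v) ∧ (∀ x ∈ b, x ≠ u ∧ x ≠ v) ∧ u ≠ v ∧
      a.Nodup ∧ b.Nodup ∧ a.Disjoint b := by
  rw [List.nodup_append] at hn
  obtain ⟨hna, hnb, hdisj⟩ := hn
  replace hdisj : a.Disjoint (u :: v :: b) := fun x hx hx' => hdisj x hx x hx' rfl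
  rw [List.nodup_cons] at hnb
  obtain ⟨hu, hnb⟩ := hnb
  rw [List.nodup_cons] at hnb
  obtain ⟨hv, hnb⟩ := hnb
  refine ⟨fun x hx => ⟨fun h => hdisj hx (h ▸ by simp), fun h => hdisj hx (h ▸ by simp)⟩,
    fun x hx => ⟨fun h => hu (h ▸ List.mem_cons_of_mem _ hx), fun h => hv (h ▸ hx)⟩,
    fun h => hu (h ▸ by simp), hna, hnb, fun {x} hx hx' => hdisj hx (by simp [hx'])⟩

theorem D_decomp {E : V → V → Prop} {u v : V} {m : ℕ} {p : (V → ℕ) × List V}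
    (hdel : p ∈ DC.SS (delEdge E u v) m) (hnot : p ∉ DC.SS E m) :
    ∃ a b, p.2 = a ++ u :: v :: b ∧ p.1 u = p.1 v := by
  obtain ⟨f, l⟩ := p
  obtain ⟨hf, hn, hcov, hfr⟩ := hdel
  dsimp only at hf hn hcov hfr ⊢
  rw [DC.friendly_iff, DC.chain'_iff_get] at hfr
  have hnfr : ¬ Friendly E f l := fun hF => hnot ⟨hf, hn, hcov, hF⟩
  rw [DC.friendly_iff, DC.chain'_iff_get] at hnfr
  push_neg at hnfr
  obtain ⟨i, hi, hbad⟩ := hnfr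
  have hgood := hfr i hi
  have h3 : ¬ (E (l.get ⟨i, by omega⟩) (l.get ⟨i+1, by omega⟩) →
      f (l.get ⟨i, by omega⟩) < f (l.get ⟨i+1, by omega⟩)) := fun h => hbad ⟨hgood.1, h⟩
  push_neg at h3
  have hxu : l.get ⟨i, by omega⟩ = u := by
    by_contra hc
    have h4 := hgood.2 ⟨h3.1, fun hand => hc hand.1⟩
    omega
  have hxv : l.get ⟨i+1, by omega⟩ = v := by
    by_contra hc
    have h4 := hgood.2 ⟨h3.1, fun hand => hc hand.2⟩
    omega
  have hfeq0 : f (l.get ⟨i, by omega⟩) = f (l.get ⟨i+1, by omega⟩) :=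
    le_antisymm hgood.1 h3.2
  have hfeq : f u = f v := by rw [hxu, hxv] at hfeq0; exact hfeq0
  refine ⟨l.take i, l.drop (i+2), ?_, hfeq⟩
  simp only [List.get_eq_getElem] at hxu hxv
  conv_lhs => rw [← List.take_append_drop i l]
  congr 1
  rw [List.drop_eq_getElem_cons (show i < l.length by omega),
    List.drop_eq_getElem_cons (show i + 1 < l.length by omega), hxu, hxv]

theorem C_decomp {u v : V} {l : List ({w : V // w ≠ u ∧ w ≠ v} ⊕ Unit)}
    (hn : l.Nodup) (hcov : ∀ x, x ∈ l) :
    ∃ a b, l = a ++ Sum.inr () :: b ∧ (∀ w ∈ a, ∃ x, w = Sum.inl x) ∧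
      (∀ w ∈ b, ∃ x, w = Sum.inl x) := by
  obtain ⟨a, b, rfl⟩ := List.append_of_mem (hcov (Sum.inr ()))
  have hn' := List.nodup_middle.mp hn
  have hnm : Sum.inr () ∉ a ++ b := (List.nodup_cons.mp hn').1
  refine ⟨a, b, rfl, ?_, ?_⟩ <;> intro w hw <;> rcases w with x | x
  · exact ⟨x, rfl⟩
  · cases x; exact absurd (List.mem_append_left b hw) hnm
  · exact ⟨x, rfl⟩
  · cases x; exact absurd (List.mem_append_right a hw) hnm

end Decomp

section Chains

variable {V : Type*} [DecidableEq V] {E : V → V → Prop} {u v : V}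

theorem chain_fwd (huv : u ≠ v) {f : V → ℕ} {a b : List V}
    (ha : ∀ x ∈ a, x ≠ u ∧ x ≠ v) (hb : ∀ x ∈ b, x ≠ u ∧ x ≠ v) (hfeq : f u = f v)
    (hc : List.Chain' (DC.Rel (delEdge E u v) f) (a ++ u :: v :: b)) :
    List.Chain' (DC.Rel (contractEdge E u v) (DC.cf u v f))
      (a.map (DC.gm u v) ++ Sum.inr () :: b.map (DC.gm u v)) := by
  rw [DC.chain'_append] at hc ⊢
  obtain ⟨hca, hcb, hlink⟩ := hc
  rw [DC.chain'_cons, DC.chain'_cons'] at hcb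
  obtain ⟨-, hvb, hcb⟩ := hcb
  have hmapiff : ∀ (c : List V), (∀ x ∈ c, x ≠ u ∧ x ≠ v) →
      ((c.map (DC.gm u v)).Chain' (DC.Rel (contractEdge E u v) (DC.cf u v f)) ↔
        c.Chain' (DC.Rel (delEdge E u v) f)) := by
    intro c hcm
    refine DC.chain'_map_congr fun x hx y hy => ?_
    obtain ⟨hxu, hxv⟩ := hcm x hx
    obtain ⟨hyu, hyv⟩ := hcm y hy
    rw [DC.gm_eq_inl hxu hxv, DC.gm_eq_inl hyu hyv]
    simp only [DC.Rel, contractEdge, DC.cf, Sum.elim_inl, delEdge]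
    constructor
    · rintro ⟨h1, h2⟩
      exact ⟨h1, fun hd => h2 hd.1⟩
    · rintro ⟨h1, h2⟩
      exact ⟨h1, fun hd => h2 ⟨hd, fun hh => hxu hh.1⟩⟩
  refine ⟨(hmapiff a ha).mpr hca, ?_, ?_⟩
  · rw [DC.chain'_cons']
    refine ⟨?_, (hmapiff b hb).mpr hcb⟩
    intro y hy
    rw [List.head?_map] at hy
    cases hhb : b.head? with
    | none => rw [hhb] at hy; simp at hy
    | some y₀ =>
      rw [hhb] at hy
      simp only [Option.map_some, Option.mem_def, Option.some.injEq] at hy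
      subst hy
      have hy₀ : y₀ ∈ b := List.mem_of_mem_head? (by rw [hhb]; rfl)
      obtain ⟨hyu, hyv⟩ := hb y₀ hy₀
      obtain ⟨h1, h2⟩ := hvb y₀ (by rw [hhb]; rfl)
      rw [DC.gm_eq_inl hyu hyv]
      simp only [DC.Rel, contractEdge, DC.cf, Sum.elim_inl, Sum.elim_inr]
      rw [hfeq]
      exact ⟨h1, fun hvy => h2 ⟨hvy, fun hh => huv hh.1.symm⟩⟩
  · intro x hx y hy
    simp only [List.head?_cons, Option.mem_def, Option.some.injEq] at hy
    subst hy
    rw [List.getLast?_map] at hx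
    cases hha : a.getLast? with
    | none => rw [hha] at hx; simp at hx
    | some x₀ =>
      rw [hha] at hx
      simp only [Option.map_some, Option.mem_def, Option.some.injEq] at hx
      subst hx
      have hx₀ : x₀ ∈ a := List.mem_of_mem_getLast? (by rw [hha]; rfl)
      obtain ⟨hxu, hxv⟩ := ha x₀ hx₀
      obtain ⟨h1, h2⟩ := hlink x₀ (by rw [hha]; rfl) u rfl
      rw [DC.gm_eq_inl hxu hxv]
      simp only [DC.Rel, contractEdge, DC.cf, Sum.elim_inl, Sum.elim_inr]
      exact ⟨h1, fun hxu' => h2 ⟨hxu', fun hh => huv hh.2⟩⟩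

theorem chain_bwd (huv : u ≠ v) {g : ({w : V // w ≠ u ∧ w ≠ v} ⊕ Unit) → ℕ}
    {a b : List ({w : V // w ≠ u ∧ w ≠ v} ⊕ Unit)}
    (ha : ∀ w ∈ a, ∃ x, w = Sum.inl x) (hb : ∀ w ∈ b, ∃ x, w = Sum.inl x)
    (hc : List.Chain' (DC.Rel (contractEdge E u v) g) (a ++ Sum.inr () :: b)) :
    List.Chain' (DC.Rel (delEdge E u v) (DC.ef u v g))
      (a.map (DC.vK u v) ++ u :: v :: b.map (DC.vK u v)) := by
  rw [DC.chain'_append] at hc ⊢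
  obtain ⟨hca, hcb, hlink⟩ := hc
  rw [DC.chain'_cons'] at hcb
  obtain ⟨hvb, hcb⟩ := hcb
  have hmapiff : ∀ (c : List ({w : V // w ≠ u ∧ w ≠ v} ⊕ Unit)),
      (∀ w ∈ c, ∃ x, w = Sum.inl x) →
      ((c.map (DC.vK u v)).Chain' (DC.Rel (delEdge E u v) (DC.ef u v g)) ↔
        c.Chain' (DC.Rel (contractEdge E u v) g)) := by
    intro c hcm
    refine DC.chain'_map_congr fun x hx y hy => ?_
    obtain ⟨x₀, rfl⟩ := hcm x hx
    obtain ⟨y₀, rfl⟩ := hcm y hy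
    simp only [DC.Rel, contractEdge, DC.vK, Sum.elim_inl, delEdge, DC.ef_val]
    constructor
    · rintro ⟨h1, h2⟩
      exact ⟨h1, fun hd => h2 ⟨hd, fun hh => x₀.2.1 hh.1⟩⟩
    · rintro ⟨h1, h2⟩
      exact ⟨h1, fun hd => h2 hd.1⟩
  refine ⟨(hmapiff a ha).mpr hca, ?_, ?_⟩
  · rw [DC.chain'_cons, DC.chain'_cons']
    refine ⟨?_, ?_, (hmapiff b hb).mpr hcb⟩
    · refine ⟨by rw [DC.ef_u, DC.ef_v], fun hd => absurd ⟨rfl, rfl⟩ hd.2⟩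
    · intro y hy
      rw [List.head?_map] at hy
      cases hhb : b.head? with
      | none => rw [hhb] at hy; simp at hy
      | some y₀ =>
        rw [hhb] at hy
        simp only [Option.map_some, Option.mem_def, Option.some.injEq] at hy
        subst hy
        have hy₀ : y₀ ∈ b := List.mem_of_mem_head? (by rw [hhb]; rfl)
        obtain ⟨y₁, rfl⟩ := hb y₀ hy₀
        obtain ⟨h1, h2⟩ := hvb (Sum.inl y₁) (by rw [hhb]; rfl)
        simp only [DC.Rel, DC.vK, Sum.elim_inl, delEdge, DC.ef_val, DC.ef_v]
        simp only [contractEdge] at h1 h2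
        exact ⟨h1, fun hd => h2 hd.1⟩
  · intro x hx y hy
    simp only [List.head?_cons, Option.mem_def, Option.some.injEq] at hy
    subst hy
    rw [List.getLast?_map] at hx
    cases hha : a.getLast? with
    | none => rw [hha] at hx; simp at hx
    | some x₀ =>
      rw [hha] at hx
      simp only [Option.map_some, Option.mem_def, Option.some.injEq] at hx
      subst hx
      have hx₀ : x₀ ∈ a := List.mem_of_mem_getLast? (by rw [hha]; rfl)
      obtain ⟨x₁, rfl⟩ := ha x₀ hx₀
      obtain ⟨h1, h2⟩ := hlink (Sum.inl x₁) (by rw [hha]; rfl) (Sum.inr ()) rfl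
      simp only [DC.Rel, DC.vK, Sum.elim_inl, delEdge, DC.ef_val, DC.ef_u]
      simp only [contractEdge] at h1 h2
      exact ⟨h1, fun hd => h2 hd.1⟩

end Chains

section Mem

variable {V : Type*} [DecidableEq V] {E : V → V → Prop} {u v : V} {m : ℕ}

theorem cf_ef (g : ({w : V // w ≠ u ∧ w ≠ v} ⊕ Unit) → ℕ) : cf u v (ef u v g) = g := by
  funext w
  rcases w with x | x
  · exact ef_val g x
  · cases x
    exact ef_u g

theorem ef_cf {f : V → ℕ} (hfeq : f u = f v) : ef u v (cf u v f) = f := by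
  funext x
  by_cases h : x ≠ u ∧ x ≠ v
  · rw [ef, dif_pos h]
    rfl
  · rw [ef, dif_neg h]
    push_neg at h
    show f u = f x
    by_cases hxu : x = u
    · rw [hxu]
    · rw [h hxu, hfeq]

theorem fwd_mem (huv : u ≠ v) {p : (V → ℕ) × List V}
    (hp : p ∈ SS (delEdge E u v) m \ SS E m) :
    (cf u v p.1, ctr u v p.2) ∈ SS (contractEdge E u v) m := by
  obtain ⟨a, b, hl, hfeq⟩ := D_decomp hp.1 hp.2
  obtain ⟨hf, hn, hcov, hfr⟩ := hp.1
  rw [hl] at hn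
  obtain ⟨ha, hb, -, hna, hnb, hab⟩ := nodup_facts hn
  have hctr : ctr u v p.2 = a.map (gm u v) ++ Sum.inr () :: b.map (gm u v) := by
    rw [hl, ctr_decomp huv a b ha hb]
  have hinj : ∀ (c : List V), (∀ x ∈ c, x ≠ u ∧ x ≠ v) →
      ∀ x ∈ c, ∀ y ∈ c, gm u v x = gm u v y → x = y := by
    intro c hc x hx y hy hxy
    rw [gm_eq_inl (hc x hx).1 (hc x hx).2, gm_eq_inl (hc y hy).1 (hc y hy).2] at hxy
    simpa using hxy
  refine ⟨?_, ?_, ?_, ?_⟩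
  · rintro (x | x)
    · exact hf x.1
    · exact hf u
  · rw [hctr, List.nodup_middle, List.nodup_cons]
    refine ⟨?_, ?_⟩
    · intro hmem
      rw [List.mem_append, List.mem_map, List.mem_map] at hmem
      rcases hmem with ⟨x, hx, hgx⟩ | ⟨x, hx, hgx⟩
      · rw [gm_eq_inl (ha x hx).1 (ha x hx).2] at hgx
        exact absurd hgx (by simp)
      · rw [gm_eq_inl (hb x hx).1 (hb x hx).2] at hgx
        exact absurd hgx (by simp)
    · rw [List.nodup_append]
      refine ⟨hna.map_on (hinj a ha), hnb.map_on (hinj b hb), ?_⟩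
      rintro z hz _ hz' rfl
      rw [List.mem_map] at hz hz'
      obtain ⟨x, hx, rfl⟩ := hz
      obtain ⟨y, hy, hxy⟩ := hz'
      rw [gm_eq_inl (hb y hy).1 (hb y hy).2, gm_eq_inl (ha x hx).1 (ha x hx).2] at hxy
      simp only [Sum.inl.injEq, Subtype.mk.injEq] at hxy
      exact hab hx (hxy ▸ hy)
  · rintro (x | x)
    · rcases x with ⟨x, hxu, hxv⟩
      have hmem := hcov x
      rw [hl, List.mem_append, List.mem_cons, List.mem_cons] at hmem
      rw [hctr, List.mem_append]
      rcases hmem with h | h | h | h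
      · exact Or.inl (List.mem_map.mpr ⟨x, h, by rw [gm_eq_inl hxu hxv]⟩)
      · exact absurd h hxu
      · exact absurd h hxv
      · exact Or.inr (List.mem_cons_of_mem _ (List.mem_map.mpr ⟨x, h, by rw [gm_eq_inl hxu hxv]⟩))
    · cases x
      rw [hctr]
      simp
  · rw [friendly_iff, hctr]
    rw [friendly_iff, hl] at hfr
    exact chain_fwd huv ha hb hfeq hfr

theorem bwd_mem (hE : ∀ x, ¬ E x x) (he : E u v)
    {q : (({w : V // w ≠ u ∧ w ≠ v} ⊕ Unit) → ℕ) × List ({w : V // w ≠ u ∧ w ≠ v} ⊕ Unit)}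
    (hq : q ∈ SS (contractEdge E u v) m) :
    (ef u v q.1, exp u v q.2) ∈ SS (delEdge E u v) m \ SS E m := by
  have huv : u ≠ v := fun h => hE u (h ▸ he)
  obtain ⟨hf, hn, hcov, hfr⟩ := hq
  obtain ⟨a, b, hl, hia, hib⟩ := C_decomp hn hcov
  have hexp : exp u v q.2 = a.map (vK u v) ++ u :: v :: b.map (vK u v) := by
    rw [hl, exp_decomp, exp_eq_map hia, exp_eq_map hib]
  have hvKa : ∀ x ∈ a.map (vK u v), x ≠ u ∧ x ≠ v := by
    intro x hx
    rw [List.mem_map] at hx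
    obtain ⟨w, hw, rfl⟩ := hx
    obtain ⟨w₀, rfl⟩ := hia w hw
    exact ⟨w₀.2.1, w₀.2.2⟩
  have hvKb : ∀ x ∈ b.map (vK u v), x ≠ u ∧ x ≠ v := by
    intro x hx
    rw [List.mem_map] at hx
    obtain ⟨w, hw, rfl⟩ := hx
    obtain ⟨w₀, rfl⟩ := hib w hw
    exact ⟨w₀.2.1, w₀.2.2⟩
  have hnd : ∀ (c : List ({w : V // w ≠ u ∧ w ≠ v} ⊕ Unit)), (∀ w ∈ c, ∃ x, w = Sum.inl x) →
      c.Nodup → (c.map (vK u v)).Nodup := by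
    intro c hic hc
    refine hc.map_on ?_
    intro x hx y hy hxy
    obtain ⟨x₀, rfl⟩ := hic x hx
    obtain ⟨y₀, rfl⟩ := hic y hy
    simp only [vK, Sum.elim_inl] at hxy
    exact congrArg Sum.inl (Subtype.ext hxy)
  rw [hl, List.nodup_append, List.nodup_cons] at hn
  obtain ⟨hna, ⟨hrb, hnb⟩, hdisj⟩ := hn
  constructor
  · refine ⟨?_, ?_, ?_, ?_⟩
    · intro x
      dsimp only
      by_cases h : x ≠ u ∧ x ≠ v
      · rw [ef, dif_pos h]; exact hf _
      · rw [ef, dif_neg h]; exact hf _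
    · rw [hexp, List.nodup_append]
      refine ⟨hnd a hia hna, ?_, ?_⟩
      · rw [List.nodup_cons, List.nodup_cons]
        refine ⟨?_, ?_, hnd b hib hnb⟩
        · rw [List.mem_cons]
          rintro (h | h)
          · exact huv h
          · exact (hvKb u h).1 rfl
        · intro h
          exact (hvKb v h).2 rfl
      · rintro z hz _ hz' rfl
        have hz2 := hvKa z hz
        rw [List.mem_cons, List.mem_cons] at hz'
        rcases hz' with h | h | h
        · exact hz2.1 h
        · exact hz2.2 h
        · rw [List.mem_map] at hz h
          obtain ⟨w₁, hw₁, rfl⟩ := hz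
          obtain ⟨w₂, hw₂, hww⟩ := h
          obtain ⟨x₁, rfl⟩ := hia w₁ hw₁
          obtain ⟨x₂, rfl⟩ := hib w₂ hw₂
          simp only [vK, Sum.elim_inl] at hww
          exact hdisj _ hw₁ _ (List.mem_cons_of_mem _
            ((congrArg Sum.inl (Subtype.ext hww)) ▸ hw₂)) rfl
    · intro x
      dsimp only
      rw [hexp]
      by_cases hxu : x = u
      · subst hxu; simp
      · by_cases hxv : x = v
        · subst hxv; simp
        · have hmem := hcov (Sum.inl ⟨x, hxu, hxv⟩)
          rw [hl, List.mem_append, List.mem_cons] at hmem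
          rw [List.mem_append, List.mem_cons, List.mem_cons]
          rcases hmem with h | h | h
          · exact Or.inl (List.mem_map.mpr ⟨_, h, rfl⟩)
          · exact absurd h (by simp)
          · exact Or.inr (Or.inr (Or.inr (List.mem_map.mpr ⟨_, h, rfl⟩)))
    · show Friendly (delEdge E u v) (ef u v q.1) (exp u v q.2)
      rw [friendly_iff, hexp]
      rw [friendly_iff, hl] at hfr
      exact chain_bwd huv hia hib hfr
  · intro hmemE
    obtain ⟨-, -, -, hfrE⟩ := hmemE
    have hfrE' : Friendly E (ef u v q.1) (exp u v q.2) := hfrE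
    rw [friendly_iff, hexp] at hfrE'
    have h2 := (DC.chain'_append.mp hfrE').2.1
    rw [DC.chain'_cons] at h2
    have h3 := h2.1.2 he
    rw [ef_u, ef_v] at h3
    exact lt_irrefl _ h3

end Mem

end DC

/-- Deletion-contraction for the Redei-Berge polynomial:
`N_X(m) = N_{X∖e}(m) − N_{X/e}(m)` for every positive integer `m`. -/
theorem deletion_contraction {V : Type*} [Fintype V] [DecidableEq V]
    (E : V → V → Prop) (hE : ∀ x, ¬ E x x)
    (u v : V) (he : E u v) (m : ℕ) (hm : 1 ≤ m) :
    (RBCount V E m : ℤ) =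
      (RBCount V (delEdge E u v) m : ℤ) -
        (RBCount ({w : V // w ≠ u ∧ w ≠ v} ⊕ Unit) (contractEdge E u v) m : ℤ) := by
  classical
  have huv : u ≠ v := fun h => hE u (h ▸ he)
  have hsub := DC.SS_subset E u v m
  have hfin : (DC.SS (delEdge E u v) m).Finite := DC.SS_finite _ m
  have hkey := Set.ncard_diff_add_ncard_of_subset hsub hfin
  have hbij : (DC.SS (delEdge E u v) m \ DC.SS E m).ncard
      = (DC.SS (contractEdge E u v) m).ncard := by
    rw [← Nat.card_coe_set_eq, ← Nat.card_coe_set_eq]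
    refine Nat.card_congr
      ⟨fun p => ⟨(DC.cf u v p.1.1, DC.ctr u v p.1.2), DC.fwd_mem huv p.2⟩,
       fun q => ⟨(DC.ef u v q.1.1, DC.exp u v q.1.2), DC.bwd_mem hE he q.2⟩, ?_, ?_⟩
    · rintro ⟨p, hp⟩
      apply Subtype.ext
      obtain ⟨a, b, hl, hfeq⟩ := DC.D_decomp hp.1 hp.2
      obtain ⟨ha, hb, -, -, -, -⟩ := DC.nodup_facts (hl ▸ hp.1.2.1)
      dsimp only
      refine Prod.ext (DC.ef_cf hfeq) ?_
      dsimp only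
      rw [hl, DC.ctr_decomp huv a b ha hb, DC.exp_decomp, DC.exp_map_gm ha, DC.exp_map_gm hb]
    · rintro ⟨q, hq⟩
      apply Subtype.ext
      exact Prod.ext (DC.cf_ef q.1) (DC.ctr_exp huv q.2)
  rw [DC.rb_eq E m, DC.rb_eq (delEdge E u v) m, DC.rb_eq (contractEdge E u v) m]
  omega
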